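/- For symmetric positive definite matrices A, B, X, Y of the same size, δ_T(X+A, Y+B) ≤ max{δ_T(X,Y), δ_T(A,B)}, where δ_T is the Thompson metric. -/

import Mathlib

open Matrix Filter

variable {n : ℕ}

/-- Largest (real) eigenvalue: supremum of the real spectrum. -/
noncomputable def maxEig (M : Matrix (Fin n) (Fin n) ℝ) : ℝ := sSup (spectrum ℝ M)

/-- Smallest (real) eigenvalue: infimum of the real spectrum. -/
noncomputable def minEig (M : Matrix (Fin n) (Fin n) ℝ) : ℝ := sInf (spectrum ℝ M)

/-- Thompson metric via the spectral formula
`δ_T(M,N) = max {log λ_max(M⁻¹N), log λ_max(N⁻¹M)}`. -/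
noncomputable def deltaT (X Y : Matrix (Fin n) (Fin n) ℝ) : ℝ :=
  max (Real.log (maxEig (X⁻¹ * Y))) (Real.log (maxEig (Y⁻¹ * X)))

/-- Spectral (ℓ²-operator) norm of a matrix. -/
noncomputable def sNorm (M : Matrix (Fin n) (Fin n) ℝ) : ℝ :=
  ‖Matrix.toEuclideanCLM (𝕜 := ℝ) M‖

open Classical in
/-- The unique positive semidefinite square root (junk value `1` off PSD matrices). -/
noncomputable def sqrtM (M : Matrix (Fin n) (Fin n) ℝ) : Matrix (Fin n) (Fin n) ℝ :=
  if h : M.PosSemidef then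
    (h.1.eigenvectorUnitary : Matrix (Fin n) (Fin n) ℝ) *
      diagonal ((↑) ∘ (√·) ∘ h.1.eigenvalues) *
      (star (h.1.eigenvectorUnitary : Matrix (Fin n) (Fin n) ℝ))
  else 1

/-- Matrix logarithm via the continuous functional calculus. -/
noncomputable def mlog (M : Matrix (Fin n) (Fin n) ℝ) : Matrix (Fin n) (Fin n) ℝ :=
  cfc Real.log M

/-- Loewner order: `A ⪯ B` iff `B - A` is positive semidefinite. -/
def loewner (A B : Matrix (Fin n) (Fin n) ℝ) : Prop := (B - A).PosSemidef

open Pointwise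

lemma maxEig_le_iff {M : Matrix (Fin n) (Fin n) ℝ} (hM : M.IsHermitian) (hn : 0 < n) {c : ℝ} :
    maxEig M ≤ c ↔ (c • (1 : Matrix (Fin n) (Fin n) ℝ) - M).PosSemidef := by
  have : Nonempty (Fin n) := ⟨⟨0, hn⟩⟩
  have hspec : spectrum ℝ M = Set.range hM.eigenvalues := hM.spectrum_real_eq_range_eigenvalues
  have halg : (algebraMap ℝ (Matrix (Fin n) (Fin n) ℝ)) c = c • 1 :=
    Algebra.algebraMap_eq_smul_one c
  have hsub : spectrum ℝ (c • (1 : Matrix (Fin n) (Fin n) ℝ) - M) = ({c} : Set ℝ) - spectrum ℝ M := by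
    rw [← halg, spectrum.singleton_sub_eq]
  have hH : (c • (1 : Matrix (Fin n) (Fin n) ℝ) - M).IsHermitian := by
    refine IsHermitian.sub ?_ hM
    simp [Matrix.IsHermitian, Matrix.conjTranspose_smul]
  constructor
  · intro h
    refine hH.posSemidef_iff_eigenvalues_nonneg.mpr (Pi.le_def.mpr fun i => (?_ : 0 ≤ hH.eigenvalues i))
    have hmem := hH.eigenvalues_mem_spectrum_real i
    rw [hsub] at hmem
    obtain ⟨a, ha, b, hb, hab⟩ := hmem
    rw [Set.mem_singleton_iff] at ha
    subst ha
    have hb' : b ≤ maxEig M :=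
      le_csSup ((hspec ▸ Set.finite_range _).bddAbove) hb
    have hab' : a - b = hH.eigenvalues i := hab
    rw [← hab']
    linarith
  · intro h
    have hne : (spectrum ℝ M).Nonempty := by
      rw [hspec]; exact Set.range_nonempty _
    refine csSup_le hne fun x hx => ?_
    have hmem : c - x ∈ spectrum ℝ (c • (1 : Matrix (Fin n) (Fin n) ℝ) - M) := by
      rw [hsub]; exact ⟨c, rfl, x, hx, rfl⟩
    rw [hH.spectrum_real_eq_range_eigenvalues] at hmem
    obtain ⟨j, hj⟩ := hmem
    have := h.eigenvalues_nonneg j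
    rw [hj] at this
    linarith

open scoped MatrixOrder in
lemma key {P Q : Matrix (Fin n) (Fin n) ℝ} (hP : P.PosDef) (hQ : Q.PosDef) (hn : 0 < n) {c : ℝ} :
    maxEig (P⁻¹ * Q) ≤ c ↔ (c • P - Q).PosSemidef := by
  have hR : (CFC.sqrt P).PosSemidef := (CFC.sqrt_nonneg P).posSemidef
  set R := CFC.sqrt P with hRdef
  have hRR : R * R = P := CFC.sqrt_mul_sqrt_self P hP.posSemidef.nonneg
  have hdet : IsUnit R.det := by
    refine isUnit_iff_ne_zero.mpr fun h0 => ?_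
    have : R.det * R.det = P.det := by rw [← det_mul, hRR]
    rw [h0, mul_zero] at this
    exact hP.det_pos.ne' this.symm
  have hu : IsUnit R := (isUnit_iff_isUnit_det R).mpr hdet
  have hRiR : R⁻¹ * R = 1 := nonsing_inv_mul R hdet
  have hRRi : R * R⁻¹ = 1 := mul_nonsing_inv R hdet
  have hRiH : R⁻¹.IsHermitian := hR.1.inv
  set M := R⁻¹ * Q * R⁻¹ with hMdef
  have hMH : M.IsHermitian := by
    have h1 := isHermitian_mul_mul_conjTranspose R⁻¹ hQ.1
    rwa [hRiH.eq] at h1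
  have hPinv : P⁻¹ = R⁻¹ * R⁻¹ := by rw [← hRR, Matrix.mul_inv_rev]
  have hconj : P⁻¹ * Q = R⁻¹ * M * R := by
    rw [hMdef, hPinv]
    simp only [← Matrix.mul_assoc]
    rw [Matrix.mul_assoc _ R⁻¹ R, hRiR, Matrix.mul_one]
  have hspec : spectrum ℝ (P⁻¹ * Q) = spectrum ℝ M := by
    have h1 : (↑hu.unit⁻¹ : Matrix (Fin n) (Fin n) ℝ) = R⁻¹ := by
      rw [Matrix.coe_units_inv, hu.unit_spec]
    rw [hconj]
    calc spectrum ℝ (R⁻¹ * M * R)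
        = spectrum ℝ (↑hu.unit⁻¹ * M * ↑hu.unit) := by rw [h1, hu.unit_spec]
      _ = spectrum ℝ M := spectrum.units_conjugate'
  have hone : R⁻¹ * P * R⁻¹ = 1 := by
    rw [← hRR]
    simp only [← Matrix.mul_assoc]
    rw [hRiR, Matrix.one_mul, hRRi]
  have e1 : c • (1 : Matrix (Fin n) (Fin n) ℝ) - M = R⁻¹ * (c • P - Q) * R⁻¹ := by
    rw [Matrix.mul_sub, Matrix.sub_mul, Matrix.mul_smul, Matrix.smul_mul, hone, hMdef]
  have e2 : R * (c • (1 : Matrix (Fin n) (Fin n) ℝ) - M) * R = c • P - Q := by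
    rw [e1]
    simp only [← Matrix.mul_assoc]
    rw [hRRi, Matrix.one_mul, Matrix.mul_assoc _ R⁻¹ R, hRiR, Matrix.mul_one]
  have hmax : maxEig (P⁻¹ * Q) = maxEig M := by
    unfold maxEig; rw [hspec]
  rw [hmax, maxEig_le_iff hMH hn]
  constructor
  · intro h
    have h1 := h.mul_mul_conjTranspose_same R
    rw [hR.1.eq, e2] at h1
    exact h1
  · intro h
    have h1 := h.mul_mul_conjTranspose_same R⁻¹
    rw [hRiH.eq, ← e1] at h1
    exact h1

lemma maxEig_pos {P Q : Matrix (Fin n) (Fin n) ℝ} (hP : P.PosDef) (hQ : Q.PosDef) (hn : 0 < n) :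
    0 < maxEig (P⁻¹ * Q) := by
  by_contra hcon
  push_neg at hcon
  have h0 : maxEig (P⁻¹ * Q) ≤ (0 : ℝ) := hcon
  have hpsd := (key hP hQ hn).mp h0
  rw [zero_smul, zero_sub] at hpsd
  have hx : (Pi.single (⟨0, hn⟩ : Fin n) (1:ℝ) : Fin n → ℝ) ≠ (0 : Fin n → ℝ) := by
    intro h
    have := congrFun h ⟨0, hn⟩
    simp at this
  have h1 := hQ.dotProduct_mulVec_pos hx
  have h2 := hpsd.dotProduct_mulVec_nonneg (Pi.single (⟨0, hn⟩ : Fin n) (1:ℝ))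
  rw [Matrix.neg_mulVec, dotProduct_neg] at h2
  linarith


theorem stmt3 (A B X Y : Matrix (Fin n) (Fin n) ℝ)
    (hA : A.PosDef) (hB : B.PosDef) (hX : X.PosDef) (hY : Y.PosDef) :
    deltaT (X + A) (Y + B) ≤ max (deltaT X Y) (deltaT A B) := by
  rcases Nat.eq_zero_or_pos n with hn | hn
  · subst hn
    have hspec : ∀ M : Matrix (Fin 0) (Fin 0) ℝ, spectrum ℝ M = ∅ := fun M => by
      ext x
      simp [spectrum.mem_iff, isUnit_of_subsingleton]
    simp [deltaT, maxEig, hspec, Real.sSup_empty, Real.log_zero]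
  · set t := max (deltaT X Y) (deltaT A B) with ht
    have hdXY : deltaT X Y ≤ t := le_max_left _ _
    have hdAB : deltaT A B ≤ t := le_max_right _ _
    have hXY : Real.log (maxEig (X⁻¹ * Y)) ≤ t := (le_max_left _ _).trans hdXY
    have hYX : Real.log (maxEig (Y⁻¹ * X)) ≤ t := (le_max_right _ _).trans hdXY
    have hAB : Real.log (maxEig (A⁻¹ * B)) ≤ t := (le_max_left _ _).trans hdAB
    have hBA : Real.log (maxEig (B⁻¹ * A)) ≤ t := (le_max_right _ _).trans hdAB
    have kXY : (Real.exp t • X - Y).PosSemidef :=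
      (key hX hY hn).mp ((Real.log_le_iff_le_exp (maxEig_pos hX hY hn)).mp hXY)
    have kYX : (Real.exp t • Y - X).PosSemidef :=
      (key hY hX hn).mp ((Real.log_le_iff_le_exp (maxEig_pos hY hX hn)).mp hYX)
    have kAB : (Real.exp t • A - B).PosSemidef :=
      (key hA hB hn).mp ((Real.log_le_iff_le_exp (maxEig_pos hA hB hn)).mp hAB)
    have kBA : (Real.exp t • B - A).PosSemidef :=
      (key hB hA hn).mp ((Real.log_le_iff_le_exp (maxEig_pos hB hA hn)).mp hBA)
    have s1 : (Real.exp t • (X + A) - (Y + B)).PosSemidef := by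
      have h := kXY.add kAB
      have e : (Real.exp t • X - Y) + (Real.exp t • A - B)
          = Real.exp t • (X + A) - (Y + B) := by
        rw [smul_add]; abel
      rwa [e] at h
    have s2 : (Real.exp t • (Y + B) - (X + A)).PosSemidef := by
      have h := kYX.add kBA
      have e : (Real.exp t • Y - X) + (Real.exp t • B - A)
          = Real.exp t • (Y + B) - (X + A) := by
        rw [smul_add]; abel
      rwa [e] at h
    have m1 : Real.log (maxEig ((X + A)⁻¹ * (Y + B))) ≤ t :=
      (Real.log_le_iff_le_exp (maxEig_pos (hX.add hA) (hY.add hB) hn)).mpr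
        ((key (hX.add hA) (hY.add hB) hn).mpr s1)
    have m2 : Real.log (maxEig ((Y + B)⁻¹ * (X + A))) ≤ t :=
      (Real.log_le_iff_le_exp (maxEig_pos (hY.add hB) (hX.add hA) hn)).mpr
        ((key (hY.add hB) (hX.add hA) hn).mpr s2)
    exact max_le m1 m2
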